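/- Let D be a weakly connected digraph whose underlying undirected graph is rayless. Then the quotient digraph D/∼, obtained by identifying the vertices within each ∼-equivalence class and deleting the resulting loops, is also rayless. -/

import Mathlib

/-- A digraph with vertex type `V` and edge type `E`, allowing parallel edges. -/
structure MultiDigraph (V : Type*) (E : Type*) where
  tail : E → V
  head : E → V

namespace MultiDigraph

variable {V : Type*} {E : Type*} (D : MultiDigraph V E)

/-- Adjacency in the underlying undirected multigraph. -/
def Adj (u v : V) : Prop :=
  ∃ e : E, (D.tail e = u ∧ D.head e = v) ∨ (D.tail e = v ∧ D.head e = u)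

/-- The underlying undirected multigraph is connected. -/
def WeaklyConnected : Prop :=
  ∀ u v : V, Relation.ReflTransGen D.Adj u v

/-- `B` is the dicut of `D` whose in-shore is `X` (every edge of the cut has its
head in `X`, and no edge leaves `X`). -/
def DicutWith (X : Set V) (B : Set E) : Prop :=
  (∀ e : E, D.tail e ∈ X → D.head e ∈ X) ∧
    B = {e : E | D.tail e ∉ X ∧ D.head e ∈ X}

/-- `B` is a dicut of `D`. -/
def IsDicut (B : Set E) : Prop :=
  ∃ X : Set V, D.DicutWith X B

/-- A dibond is a minimal non-empty dicut. -/
def IsDibond (B : Set E) : Prop :=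
  D.IsDicut B ∧ B.Nonempty ∧
    ∀ B' : Set E, D.IsDicut B' → B'.Nonempty → B' ⊆ B → B' = B

/-- A dijoin meets every non-empty dicut. -/
def Dijoin (F : Set E) : Prop :=
  ∀ B : Set E, D.IsDicut B → B.Nonempty → (F ∩ B).Nonempty

/-- A finitary dijoin meets every non-empty finite dicut. -/
def FinitaryDijoin (F : Set E) : Prop :=
  ∀ B : Set E, D.IsDicut B → B.Finite → B.Nonempty → (F ∩ B).Nonempty

/-- Two dicuts are nested if they have witnessing sides one of which is
`⊆`-comparable with a side of the other. -/
def NestedDicuts (B₁ B₂ : Set E) : Prop :=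
  ∃ X₁ X₂ : Set V, D.DicutWith X₁ B₁ ∧ D.DicutWith X₂ B₂ ∧
    (X₁ ⊆ X₂ ∨ X₂ ⊆ X₁ ∨ X₁ ⊆ X₂ᶜ ∨ X₂ᶜ ⊆ X₁)

/-- An optimal pair: a set `ℬ` of pairwise disjoint finite dicuts and a finitary
dijoin `F ⊆ ⋃ ℬ` meeting each member of `ℬ` in exactly one edge. -/
def OptimalPair (F : Set E) (ℬ : Set (Set E)) : Prop :=
  (∀ B ∈ ℬ, D.IsDicut B ∧ B.Finite) ∧
    ℬ.Pairwise Disjoint ∧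
    D.FinitaryDijoin F ∧
    F ⊆ ⋃₀ ℬ ∧
    ∀ B ∈ ℬ, (F ∩ B).ncard = 1

/-- A nested optimal pair. -/
def NestedOptimalPair (F : Set E) (ℬ : Set (Set E)) : Prop :=
  D.OptimalPair F ℬ ∧ ℬ.Pairwise D.NestedDicuts

/-- The underlying multigraph contains no ray. -/
def Rayless : Prop :=
  ¬ ∃ f : ℕ → V, Function.Injective f ∧ ∀ n : ℕ, D.Adj (f n) (f (n + 1))

/-- The (undirected) cut of `D` with side `X`: all edges with exactly one
endpoint in `X`. -/
def cutEdges (X : Set V) : Set E :=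
  {e : E | (D.tail e ∈ X ∧ D.head e ∉ X) ∨ (D.tail e ∉ X ∧ D.head e ∈ X)}

/-- Any two distinct vertices are separated by a finite cut. -/
def FinitelySeparable : Prop :=
  ∀ v w : V, v ≠ w → ∃ X : Set V, (D.cutEdges X).Finite ∧ v ∈ X ∧ w ∉ X

/-- Any two distinct vertices lie on different sides of some finite dicut. -/
def FinitelyDiseparable : Prop :=
  ∀ v w : V, v ≠ w → ∃ (X : Set V) (B : Set E), D.DicutWith X B ∧ B.Finite ∧
    ((v ∈ X ∧ w ∉ X) ∨ (v ∉ X ∧ w ∈ X))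

/-- The underlying multigraph is 2-connected: it is connected and deleting any
single vertex keeps it connected. -/
def UnderlyingTwoConnected : Prop :=
  D.WeaklyConnected ∧ ∀ x u v : V, u ≠ x → v ≠ x →
    Relation.ReflTransGen (fun a b => a ≠ x ∧ b ≠ x ∧ D.Adj a b) u v

/-- `v ∼ w`: no finite dicut of `D` separates `v` and `w`. -/
def Sim (v w : V) : Prop :=
  ∀ (X : Set V) (B : Set E), D.DicutWith X B → B.Finite → (v ∈ X ↔ w ∈ X)

/-- `W` is a witness for `v ∼ w`: it meets every finite cut separating `v`
and `w` in both directions. -/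
def Witness (v w : V) (W : Set E) : Prop :=
  ∀ X : Set V, (D.cutEdges X).Finite → v ∈ X → w ∉ X →
    (∃ e ∈ W, D.tail e ∈ X ∧ D.head e ∉ X) ∧
    (∃ e ∈ W, D.tail e ∉ X ∧ D.head e ∈ X)

end MultiDigraph

namespace MultiDigraph

variable {V : Type*} {E : Type*} (D : MultiDigraph V E)

/-- `∼` (no finite dicut separates the two vertices) as a setoid on `V`. -/
def simSetoid : Setoid V where
  r := D.Sim
  iseqv := ⟨fun _ _ _ _ _ => Iff.rfl,
    fun h X B hB hfin => (h X B hB hfin).symm,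
    fun h₁ h₂ X B hB hfin => (h₁ X B hB hfin).trans (h₂ X B hB hfin)⟩

/-- The quotient digraph `D/∼`: its vertices are the `∼`-equivalence classes,
and its edges are the edges of `D` whose endpoints are not `∼`-equivalent
(i.e. all loops arising from the identification are deleted). -/
def quotientBySim :
    MultiDigraph (Quotient D.simSetoid) {e : E // ¬ D.Sim (D.tail e) (D.head e)} where
  tail e := Quotient.mk D.simSetoid (D.tail e.1)
  head e := Quotient.mk D.simSetoid (D.head e.1)

end MultiDigraph

section Aux

open Relation

variable {V E : Type*}

lemma MultiDigraph.adj_symm (D : MultiDigraph V E) {a b : V} (h : D.Adj a b) : D.Adj b a := by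
  obtain ⟨e, h⟩ := h; exact ⟨e, h.symm⟩

lemma MultiDigraph.adj_tail_head (D : MultiDigraph V E) (e : E) :
    D.Adj (D.tail e) (D.head e) := ⟨e, Or.inl ⟨rfl, rfl⟩⟩

/-- Key separation lemma: if `v ∼ w` and `S` is a finite set of vertices none of
which is `∼ v`, then `w` can be reached from `v` by a walk avoiding `S`. -/
lemma MultiDigraph.reach_of_sim (D : MultiDigraph V E) {v w : V} (hvw : D.Sim v w)
    (S : Set V) (hS : S.Finite) (hsep : ∀ s ∈ S, ¬ D.Sim s v) :
    Relation.ReflTransGen (fun a b => D.Adj a b ∧ b ∉ S) v w := by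
  by_contra hr
  have hsep' : ∀ s : S, ∃ X : Set V, (∀ e, D.tail e ∈ X → D.head e ∈ X) ∧
      {e | D.tail e ∉ X ∧ D.head e ∈ X}.Finite ∧ ¬((s : V) ∈ X ↔ v ∈ X) := by
    intro s
    have h1 := hsep s s.2
    unfold MultiDigraph.Sim at h1
    push_neg at h1
    obtain ⟨X, B, hXB, hfin, hne⟩ := h1
    obtain ⟨hcl, rfl⟩ := hXB
    exact ⟨X, hcl, hfin, by tauto⟩
  choose X hcl hfin hiff using hsep'
  set step : V → V → Prop := fun a b => D.Adj a b ∧ b ∉ S with hstep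
  set K : Set V := {z | Relation.ReflTransGen step v z} with hK
  have hwK : w ∉ K := hr
  set A : Set V := {z | ∀ s : S, v ∈ X s → z ∈ X s} with hA
  set Bs : Set V := {z | ∃ s : S, v ∉ X s ∧ z ∈ X s} with hBs
  set Y : Set V := (K ∩ A) ∪ Bs with hY
  have hvA : v ∈ A := fun s hs => hs
  have hclY : ∀ e, D.tail e ∈ Y → D.head e ∈ Y := by
    intro e he
    rcases he with ⟨hKt, hAt⟩ | ⟨s, hvX, hX⟩
    · have hAh : D.head e ∈ A := fun s hs => hcl s e (hAt s hs)
      by_cases hhS : D.head e ∈ S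
      · by_cases hv' : v ∈ X ⟨_, hhS⟩
        · exact absurd (iff_of_true (hAh ⟨_, hhS⟩ hv') hv') (hiff ⟨_, hhS⟩)
        · refine Or.inr ⟨⟨_, hhS⟩, hv', ?_⟩
          by_contra hnot
          exact hiff ⟨_, hhS⟩ (iff_of_false hnot hv')
      · exact Or.inl ⟨Relation.ReflTransGen.tail hKt ⟨D.adj_tail_head e, hhS⟩, hAh⟩
    · exact Or.inr ⟨s, hvX, hcl s e hX⟩
  have hfinY : {e | D.tail e ∉ Y ∧ D.head e ∈ Y}.Finite := by
    have hFS : Finite S := hS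
    refine Set.Finite.subset (Set.finite_iUnion
      (f := fun s : S => {e | D.tail e ∉ X s ∧ D.head e ∈ X s}) (fun s => hfin s)) ?_
    rintro e ⟨ht, hh⟩
    rcases hh with ⟨hKh, hAh⟩ | ⟨s, hvX, hX⟩
    · by_cases htS : D.tail e ∈ S
      · by_cases hv' : v ∈ X ⟨_, htS⟩
        · have h1 : D.tail e ∉ X ⟨_, htS⟩ := by
            intro h2; exact hiff ⟨_, htS⟩ (iff_of_true h2 hv')
          exact Set.mem_iUnion.2 ⟨⟨_, htS⟩, h1, hAh ⟨_, htS⟩ hv'⟩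
        · have h1 : D.tail e ∈ X ⟨_, htS⟩ := by
            by_contra h2; exact hiff ⟨_, htS⟩ (iff_of_false h2 hv')
          exact absurd (Or.inr ⟨⟨_, htS⟩, hv', h1⟩) ht
      · have htK : D.tail e ∈ K :=
          Relation.ReflTransGen.tail hKh ⟨D.adj_symm (D.adj_tail_head e), htS⟩
        have htA : D.tail e ∉ A := fun hA' => ht (Or.inl ⟨htK, hA'⟩)
        simp only [hA, Set.mem_setOf_eq] at htA
        push_neg at htA
        obtain ⟨s, hvX, htX⟩ := htA
        exact Set.mem_iUnion.2 ⟨s, htX, hAh s hvX⟩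
    · have h1 : D.tail e ∉ X s := fun h2 => ht (Or.inr ⟨s, hvX, h2⟩)
      exact Set.mem_iUnion.2 ⟨s, h1, hX⟩
  have hiffvw := hvw Y _ ⟨hclY, rfl⟩ hfinY
  have hvY : v ∈ Y := Or.inl ⟨Relation.ReflTransGen.refl, hvA⟩
  rcases hiffvw.1 hvY with ⟨hwK', _⟩ | ⟨s, hvX, hwX⟩
  · exact hwK hwK'
  · exact hvX ((hvw (X s) _ ⟨hcl s, rfl⟩ (hfin s)).2 hwX)

lemma chain_targets {α : Type*} {r : α → α → Prop} :
    ∀ {a : α} {l : List α}, List.Chain r a l → ∀ x ∈ l, ∃ y, r y x := by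
  intro a l
  induction l generalizing a with
  | nil => intro _ x hx; cases hx
  | cons b t ih =>
    intro h x hx
    rcases List.chain_cons.1 h with ⟨hab, ht⟩
    rcases List.mem_cons.1 hx with rfl | hx
    · exact ⟨a, hab⟩
    · exact ih ht x hx

/-- Extraction: an infinite walk visiting every vertex finitely often yields a ray. -/
lemma MultiDigraph.ray_of_walk (D : MultiDigraph V E) (g : ℕ → V)
    (hadj : ∀ n, D.Adj (g n) (g (n + 1)))
    (hfin : ∀ x, {k | g k = x}.Finite) :
    ∃ r : ℕ → V, Function.Injective r ∧ ∀ n, D.Adj (r n) (r (n + 1)) := by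
  classical
  have hmem : ∀ m, m ∈ (hfin (g m)).toFinset := by
    intro m; rw [Set.Finite.mem_toFinset]; exact rfl
  set L : ℕ → ℕ := fun m => ((hfin (g m)).toFinset).max' ⟨m, hmem m⟩ with hL
  have hLle : ∀ m, m ≤ L m := fun m => Finset.le_max' _ m (hmem m)
  have hgL : ∀ m, g (L m) = g m := by
    intro m
    have h1 := Finset.max'_mem ((hfin (g m)).toFinset) ⟨m, hmem m⟩
    rwa [Set.Finite.mem_toFinset] at h1
  have hgt : ∀ m j, L m < j → g j ≠ g m := by
    intro m j hj hgj
    have h1 : j ∈ (hfin (g m)).toFinset := by rw [Set.Finite.mem_toFinset]; exact hgj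
    exact absurd (Finset.le_max' _ j h1) (not_le.2 hj)
  set seq : ℕ → ℕ := fun k => Nat.rec 0 (fun _ nk => L nk + 1) k with hseq
  have hseqsucc : ∀ k, seq (k + 1) = L (seq k) + 1 := fun k => rfl
  have hmono : StrictMono seq := strictMono_nat_of_lt_succ (by
    intro n; rw [hseqsucc]; exact Nat.lt_succ_of_le (hLle _))
  refine ⟨fun k => g (seq k), ?_, ?_⟩
  · have hne : ∀ a b, a < b → g (seq a) ≠ g (seq b) := by
      intro a b hab h
      have h1 : L (seq a) < seq b := by
        have h2 : seq (a + 1) ≤ seq b := hmono.monotone (Nat.succ_le_of_lt hab)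
        rw [hseqsucc a] at h2; omega
      exact hgt (seq a) (seq b) h1 h.symm
    intro a b hab'
    rcases lt_trichotomy a b with h | h | h
    · exact absurd hab' (hne a b h)
    · exact h
    · exact absurd hab'.symm (hne b a h)
  · intro n
    have h1 := hadj (L (seq n))
    rw [hgL (seq n)] at h1
    have h2 : seq (n + 1) = L (seq n) + 1 := hseqsucc n
    show D.Adj (g (seq n)) (g (seq (n + 1)))
    rw [h2]
    exact h1

end Aux

/-- If a weakly connected digraph `D` is rayless, then so is the quotient
digraph `D/∼`. -/
theorem quotientBySim_rayless {V E : Type*}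
    (D : MultiDigraph V E) (hD : D.WeaklyConnected) (h : D.Rayless) :
    D.quotientBySim.Rayless := by
  rintro ⟨f, hf, hadj⟩
  classical
  -- extract adjacent representatives
  have hUV : ∀ n, ∃ p : V × V, D.Adj p.1 p.2 ∧
      Quotient.mk D.simSetoid p.1 = f n ∧ Quotient.mk D.simSetoid p.2 = f (n + 1) := by
    intro n
    obtain ⟨e, he⟩ := hadj n
    rcases he with ⟨h1, h2⟩ | ⟨h1, h2⟩
    · exact ⟨(D.tail e.1, D.head e.1), ⟨e.1, Or.inl ⟨rfl, rfl⟩⟩, h1, h2⟩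
    · exact ⟨(D.head e.1, D.tail e.1), ⟨e.1, Or.inr ⟨rfl, rfl⟩⟩, h2, h1⟩
  choose p hadjp hcls1 hcls2 using hUV
  set u : ℕ → V := fun n => (p n).1 with hu
  set v : ℕ → V := fun n => (p n).2 with hv
  have hsim : ∀ n, D.Sim (v n) (u (n + 1)) := by
    intro n
    exact Quotient.exact ((hcls2 n).trans (hcls1 (n + 1)).symm)
  -- connectors avoiding previously visited vertices outside the current class
  have conn : ∀ (n : ℕ) (Lst : List V), ∃ l : List V,
      List.Chain D.Adj (v n) l ∧
      (v n :: l).getLast (List.cons_ne_nil _ _) = u (n + 1) ∧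
      ∀ x ∈ l, x ∈ Lst → Quotient.mk D.simSetoid x = f (n + 1) := by
    intro n Lst
    set S : Set V := {y | y ∈ Lst ∧ Quotient.mk D.simSetoid y ≠ f (n + 1)} with hSdef
    have hSfin : S.Finite := (Lst.finite_toSet).subset fun y hy => hy.1
    have hsep : ∀ s ∈ S, ¬ D.Sim s (v n) := by
      intro s hs hsim'
      exact hs.2 ((Quotient.sound hsim').trans (hcls2 n))
    have hreach := D.reach_of_sim (hsim n) S hSfin hsep
    obtain ⟨l, hchain, hlast⟩ := List.exists_isChain_cons_of_relationReflTransGen hreach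
    refine ⟨l, List.Chain.imp (fun a b hab => hab.1) hchain, hlast, ?_⟩
    intro x hx hxL
    obtain ⟨y, hy⟩ := chain_targets hchain x hx
    by_contra hne
    exact hy.2 ⟨hxL, hne⟩
  -- the recursively defined walk
  set W : ℕ → List V := fun n =>
    Nat.rec [u 0] (fun n Wn => Wn ++ (v n :: Classical.choose (conn n Wn))) n with hW
  have hWsucc : ∀ n, W (n + 1) = W n ++ (v n :: Classical.choose (conn n (W n))) :=
    fun n => rfl
  have hne : ∀ n, W n ≠ [] := by
    intro n
    cases n with
    | zero => simp [hW]
    | succ n => rw [hWsucc]; simp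
  have hlast : ∀ n, (W n).getLast? = some (u n) := by
    intro n
    cases n with
    | zero => rfl
    | succ n =>
      have hsp := (Classical.choose_spec (conn n (W n))).2.1
      rw [hWsucc, List.getLast?_append,
        List.getLast?_eq_getLast (List.cons_ne_nil _ _), hsp]
      simp
  have hchainW : ∀ n, (W n).Chain' D.Adj := by
    intro n
    induction n with
    | zero => exact List.IsChain.singleton _
    | succ n ih =>
      rw [hWsucc]
      refine List.isChain_append.2 ⟨ih, ?_, ?_⟩
      · exact (Classical.choose_spec (conn n (W n))).1
      · intro x hx y hy
        rw [hlast n] at hx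
        simp only [Option.mem_some_iff] at hx
        simp only [List.head?_cons, Option.mem_some_iff] at hy
        subst hx; subst hy
        exact hadjp n
  have hlenstep : ∀ n, (W n).length < (W (n + 1)).length := by
    intro n; rw [hWsucc]; simp
  have hlenmono : StrictMono (fun n => (W n).length) := strictMono_nat_of_lt_succ hlenstep
  have hlen : ∀ n, n + 1 ≤ (W n).length := by
    intro n
    induction n with
    | zero => simp [hW]
    | succ n ih => have := hlenstep n; omega
  have hWmono : ∀ {m m' : ℕ}, m ≤ m' → W m <+: W m' := by
    intro m m' hmm
    induction m' with
    | zero => rw [Nat.le_zero.1 hmm]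
    | succ m' ih =>
      rcases Nat.lt_or_ge m (m' + 1) with h1 | h1
      · have h2 := ih (Nat.lt_succ_iff.1 h1)
        rw [hWsucc]
        exact h2.trans (List.prefix_append _ _)
      · have : m = m' + 1 := le_antisymm hmm h1
        subst this
        exact List.prefix_refl _
  set g : ℕ → V := fun k => (W (k + 1)).getD k (u 0) with hg
  have hkw : ∀ k : ℕ, k < (W (k + 1)).length := by
    intro k; have := hlen (k + 1); omega
  have hagree : ∀ {m k : ℕ}, k < (W m).length → g k = (W m).getD k (u 0) := by
    intro m k hk
    rcases le_total m (k + 1) with h1 | h1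
    · obtain ⟨t, ht⟩ := hWmono h1
      show (W (k + 1)).getD k (u 0) = _
      rw [← ht, List.getD_append _ _ _ _ hk]
    · obtain ⟨t, ht⟩ := hWmono h1
      show (W (k + 1)).getD k (u 0) = _
      rw [← ht, List.getD_append _ _ _ _ (hkw k)]
  have hmemW : ∀ k, g k ∈ W (k + 1) := by
    intro k
    have hk : k < (W (k + 1)).length := hkw k
    show (W (k + 1)).getD k (u 0) ∈ W (k + 1)
    rw [List.getD_eq_getElem _ _ hk]
    exact List.getElem_mem hk
  have hgadj : ∀ k, D.Adj (g k) (g (k + 1)) := by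
    intro k
    have h2 : k + 1 < (W (k + 2)).length := by have := hlen (k + 2); omega
    have h1 : k < (W (k + 2)).length := by omega
    have h3 := List.isChain_iff_getElem.1 (hchainW (k + 2)) k (by omega)
    rw [hagree (m := k + 2) h1, hagree (m := k + 2) h2, List.getD_eq_getElem _ _ h1, List.getD_eq_getElem _ _ h2]
    simpa [List.get_eq_getElem] using h3
  -- the class invariant along segments
  have hseg : ∀ n k, (W n).length ≤ k → k < (W (n + 1)).length → ∀ x, g k = x →
      x ∈ W n → Quotient.mk D.simSetoid x = f (n + 1) := by
    intro n k h1 h2 x hgk hxW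
    have hx : x ∈ (v n :: Classical.choose (conn n (W n))) := by
      have h4 : g k = (W (n + 1)).getD k (u 0) := hagree (m := n + 1) h2
      rw [hgk] at h4
      rw [hWsucc n] at h4 h2
      rw [List.getD_eq_getElem _ _ h2] at h4
      rw [List.getElem_append_right h1] at h4
      rw [h4]
      exact List.getElem_mem _
    rcases List.mem_cons.1 hx with rfl | hx
    · exact hcls2 n
    · exact (Classical.choose_spec (conn n (W n))).2.2 x hx hxW
  -- every vertex occurs finitely often
  have hfing : ∀ x, {k | g k = x}.Finite := by
    intro x
    by_contra hinf
    have hub : ∀ N, ∃ k, N ≤ k ∧ g k = x := by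
      intro N
      by_contra hb
      push_neg at hb
      refine hinf (Set.Finite.subset (Set.finite_Iio N) ?_)
      intro k hk
      by_contra hN
      exact hb k (le_of_not_gt (fun h' => hN h')) hk
    obtain ⟨k₀, _, hk₀⟩ := hub 0
    have hxW : x ∈ W (k₀ + 1) := hk₀ ▸ hmemW k₀
    have hstage : ∀ k, (W (k₀ + 1)).length ≤ k → g k = x →
        ∃ n, (W n).length ≤ k ∧ k < (W (n + 1)).length ∧
          Quotient.mk D.simSetoid x = f (n + 1) := by
      intro k hk hgk
      set P := fun n => (W n).length ≤ k with hP
      have h0 : P (k₀ + 1) := hk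
      have hbound : k₀ + 1 ≤ k := le_trans (by have := hlen (k₀ + 1); omega) hk
      set n := Nat.findGreatest P k with hn
      have hPn : P n := Nat.findGreatest_spec hbound h0
      have hmax : k < (W (n + 1)).length := by
        by_contra hc
        push_neg at hc
        have hnk : n + 1 ≤ k := le_trans (by have := hlen (n + 1); omega) hc
        exact Nat.findGreatest_is_greatest (Nat.lt_succ_self n) hnk hc
      have hge : k₀ + 1 ≤ n := by
        by_contra hcc
        push_neg at hcc
        have h5 : (W (n + 1)).length ≤ (W (k₀ + 1)).length := hlenmono.monotone hcc
        omega
      exact ⟨n, hPn, hmax, hseg n k hPn hmax x hgk ((hWmono hge).subset hxW)⟩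
    obtain ⟨k₁, hk₁N, hk₁⟩ := hub ((W (k₀ + 1)).length)
    obtain ⟨n₁, _, hk₁lt, hcls₁⟩ := hstage k₁ hk₁N hk₁
    obtain ⟨k₂, hk₂N, hk₂⟩ := hub (max ((W (k₀ + 1)).length) ((W (n₁ + 1)).length))
    obtain ⟨n₂, hn₂le, hk₂lt, hclsB⟩ := hstage k₂ (le_trans (le_max_left _ _) hk₂N) hk₂
    have heq : n₁ = n₂ := by
      have h6 := hf (hcls₁.symm.trans hclsB)
      omega
    subst heq
    have h7 : (W (n₁ + 1)).length ≤ k₂ := le_trans (le_max_right _ _) hk₂N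
    omega
  obtain ⟨r, hrinj, hradj⟩ := D.ray_of_walk g hgadj hfing
  exact h ⟨r, hrinj, hradj⟩
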